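/- arXiv:2302.04374 — 2 statements merged into one kernel-verified Lean document; each statement's English description precedes it below -/
import Mathlib

section
/- Let ι be a finite type, q̃ : ι → ℝ with q̃ i > 0 for all i, and let C be a convex set of functions q : ι → ℝ such that every q ∈ C satisfies q i > 0 for all i. Suppose q̂ ∈ C minimizes the unnormalized relative entropy to q̃ over C, i.e., D(q̂‖q̃) ≤ D(p‖q̃) for all p ∈ C. Then for every q ∈ C, the generalized Pythagorean inequality holds: D(q‖q̃) ≥ D(q‖q̂) + D(q̂‖q̃). -/
/-- The unnormalized relative entropy
`D(q‖q') = ∑ i, q i * log (q i / q' i) - ∑ i, (q i - q' i)`. -/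
noncomputable def unnormalizedRelEnt {ι : Type*} [Fintype ι] (q q' : ι → ℝ) : ℝ :=
  ∑ i, q i * Real.log (q i / q' i) - ∑ i, (q i - q' i)

/-- Generalized Pythagorean inequality for the Bregman projection (w.r.t. the
unnormalized relative entropy) onto a convex set of positive vectors. -/
theorem bregman_pythagorean
    {ι : Type*} [Fintype ι] (qtil : ι → ℝ) (hqtil : ∀ i, 0 < qtil i)
    (C : Set (ι → ℝ)) (hCconv : Convex ℝ C) (hCpos : ∀ p ∈ C, ∀ i, 0 < p i)
    (qhat : ι → ℝ) (hqhatC : qhat ∈ C)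
    (hmin : ∀ p ∈ C, unnormalizedRelEnt qhat qtil ≤ unnormalizedRelEnt p qtil)
    (q : ι → ℝ) (hqC : q ∈ C) :
    unnormalizedRelEnt q qhat + unnormalizedRelEnt qhat qtil
      ≤ unnormalizedRelEnt q qtil := by
  classical
  have hq : ∀ i, 0 < q i := hCpos q hqC
  have hqh : ∀ i, 0 < qhat i := hCpos qhat hqhatC
  set v : ι → ℝ := fun i => q i - qhat i with hv
  set D : ℝ := ∑ i, v i * Real.log (qhat i / qtil i) with hD
  -- Step 1: D ≥ 0 via first-order optimality
  have key : 0 ≤ D := by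
    set φ : ℝ → ℝ := fun t => unnormalizedRelEnt (fun i => qhat i + t * v i) qtil with hφ
    have hderiv : HasDerivAt φ D 0 := by
      have hterm : ∀ i : ι, HasDerivAt
          (fun t : ℝ => (qhat i + t * v i) * Real.log ((qhat i + t * v i) / qtil i))
          (v i * (Real.log (qhat i / qtil i) + 1)) 0 := by
        intro i
        have hline : HasDerivAt (fun t : ℝ => qhat i + t * v i) (v i) 0 := by
          simpa using ((hasDerivAt_id (0:ℝ)).mul_const (v i)).const_add (qhat i)
        have hg : HasDerivAt (fun x : ℝ => x * Real.log (x / qtil i))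
            (Real.log (qhat i / qtil i) + 1) (qhat i) := by
          have h1 : HasDerivAt (fun x : ℝ => x * Real.log x - Real.log (qtil i) * x)
              (Real.log (qhat i) + 1 - Real.log (qtil i)) (qhat i) := by
            simpa using (Real.hasDerivAt_mul_log (hqh i).ne').fun_sub
              ((hasDerivAt_id (qhat i)).const_mul (Real.log (qtil i)))
          have heq : (fun x : ℝ => x * Real.log x - Real.log (qtil i) * x)
              =ᶠ[nhds (qhat i)] (fun x : ℝ => x * Real.log (x / qtil i)) := by
            filter_upwards [eventually_gt_nhds (hqh i)] with x hx
            rw [Real.log_div hx.ne' (hqtil i).ne']; ring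
          have := h1.congr_of_eventuallyEq heq.symm
          refine this.congr_deriv ?_
          rw [Real.log_div (hqh i).ne' (hqtil i).ne']; ring
        have hg' : HasDerivAt (fun x : ℝ => x * Real.log (x / qtil i))
            (Real.log (qhat i / qtil i) + 1) (qhat i + 0 * v i) := by simpa using hg
        have := hg'.comp 0 hline
        simpa [mul_comm, Function.comp_def] using this
      have hsum1 : HasDerivAt
          (fun t : ℝ => ∑ i, (qhat i + t * v i) * Real.log ((qhat i + t * v i) / qtil i))
          (∑ i, v i * (Real.log (qhat i / qtil i) + 1)) 0 :=
        HasDerivAt.fun_sum fun i _ => hterm i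
      have hsum2 : HasDerivAt (fun t : ℝ => ∑ i, (qhat i + t * v i - qtil i))
          (∑ i, v i) 0 := by
        refine HasDerivAt.fun_sum fun i _ => ?_
        simpa using (((hasDerivAt_id (0:ℝ)).mul_const (v i)).const_add (qhat i)).sub_const (qtil i)
      have := hsum1.sub hsum2
      have hDeq : (∑ i, v i * (Real.log (qhat i / qtil i) + 1)) - ∑ i, v i = D := by
        rw [hD, ← Finset.sum_sub_distrib]
        exact Finset.sum_congr rfl fun i _ => by ring
      rw [hDeq] at this
      exact this
    have hφ0 : φ 0 = unnormalizedRelEnt qhat qtil := by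
      simp [hφ]
    have hφmin : ∀ t ∈ Set.Ioc (0:ℝ) 1, φ 0 ≤ φ t := by
      intro t ht
      have hmem : (fun i => qhat i + t * v i) ∈ C := by
        have := hCconv hqhatC hqC (by linarith [ht.1, ht.2] : (0:ℝ) ≤ 1 - t)
          (le_of_lt ht.1) (by ring)
        convert this using 1
        funext i
        simp [hv, smul_eq_mul]
        ring
      rw [hφ0]
      exact hmin _ hmem
    have hslope := hasDerivAt_iff_tendsto_slope.mp hderiv
    have hslope' : Filter.Tendsto (slope φ 0) (nhdsWithin 0 (Set.Ioi 0)) (nhds D) :=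
      hslope.mono_left (nhdsWithin_mono _ (fun x hx => ne_of_gt hx))
    refine ge_of_tendsto hslope' ?_
    filter_upwards [Ioc_mem_nhdsGT_of_mem (by norm_num : (0:ℝ) ∈ Set.Ico (0:ℝ) 1)] with t ht
    have h1 := hφmin t ht
    have : slope φ 0 t = (φ t - φ 0) / t := by simp [slope_def_field]
    rw [this]
    exact div_nonneg (by linarith) (le_of_lt ht.1)
  -- Step 2: algebraic identity
  have hsum : unnormalizedRelEnt q qtil
      = unnormalizedRelEnt q qhat + unnormalizedRelEnt qhat qtil + D := by
    have expand : ∀ i, q i * Real.log (q i / qtil i)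
        = q i * Real.log (q i / qhat i) + q i * Real.log (qhat i / qtil i) := by
      intro i
      rw [Real.log_div (hq i).ne' (hqtil i).ne', Real.log_div (hq i).ne' (hqh i).ne',
        Real.log_div (hqh i).ne' (hqtil i).ne']
      ring
    have h1 : ∑ i, q i * Real.log (q i / qtil i)
        = ∑ i, q i * Real.log (q i / qhat i) + ∑ i, q i * Real.log (qhat i / qtil i) := by
      rw [← Finset.sum_add_distrib]
      exact Finset.sum_congr rfl fun i _ => expand i
    have h2 : ∑ i, (q i - qtil i) = ∑ i, (q i - qhat i) + ∑ i, (qhat i - qtil i) := by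
      rw [← Finset.sum_add_distrib]
      exact Finset.sum_congr rfl fun i _ => by ring
    have h3 : D = ∑ i, q i * Real.log (qhat i / qtil i)
        - ∑ i, qhat i * Real.log (qhat i / qtil i) := by
      rw [hD, ← Finset.sum_sub_distrib]
      exact Finset.sum_congr rfl fun i _ => by rw [hv]; ring
    simp only [unnormalizedRelEnt]
    rw [h1, h2, h3]; ring
  linarith
end

section
/- Let ι be a nonempty finite type with cardinality n, let H be a positive integer, and let h : ι → {1,…,H} be a surjective layer assignment; for each layer b let n_b be the cardinality of {i : h i = b} (so n_b ≥ 1 and ∑_b n_b = n). Let p : ι → ℝ satisfy p i ≥ 0 for all i and ∑_{i : h i = b} p i = 1 for every layer b, and define the per-layer uniform vector û by û i = 1 / n_{h i}. Then ∑_i p i · log(p i / û i) ≤ H · log(n / H), where terms with p i = 0 contribute 0. -/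
open Finset

/-- The KL bound used in equation (25) of the paper: for any vector `p` that is
a probability distribution on each of the `H` layers, the relative entropy to
the per-layer uniform vector `û i = 1 / n_{h i}` is at most `H * log (n / H)`. -/
theorem kl_to_layerwise_uniform_le
    {ι : Type*} [Fintype ι] [Nonempty ι] (H : ℕ) (hH : 0 < H)
    (h : ι → Fin H) (hsurj : Function.Surjective h)
    (p : ι → ℝ) (hp : ∀ i, 0 ≤ p i)
    (hsum : ∀ b : Fin H, ∑ i ∈ Finset.univ.filter (fun i => h i = b), p i = 1) :
    ∑ i, p i * Real.log (p i /
        (1 / ((Finset.univ.filter (fun j => h j = h i)).card : ℝ)))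
      ≤ (H : ℝ) * Real.log ((Fintype.card ι : ℝ) / (H : ℝ)) := by
  classical
  set f : Fin H → ℕ := fun b => (Finset.univ.filter (fun j => h j = b)).card with hf
  have hfpos : ∀ b, 0 < f b := by
    intro b
    obtain ⟨i, hi⟩ := hsurj b
    exact Finset.card_pos.2 ⟨i, by simp [hf, hi]⟩
  have hcard : ∑ b, f b = Fintype.card ι := by
    rw [hf]
    exact (Finset.card_eq_sum_card_fiberwise (fun x _ => Finset.mem_univ (h x))).symm
  -- split over fibers
  rw [← Finset.sum_fiberwise (s := Finset.univ) (g := h)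
      (f := fun i => p i * Real.log (p i /
        (1 / ((Finset.univ.filter (fun j => h j = h i)).card : ℝ))))]
  have hple : ∀ b, ∀ i ∈ Finset.univ.filter (fun i => h i = b), p i ≤ 1 := by
    intro b i hi
    calc p i ≤ ∑ j ∈ Finset.univ.filter (fun i => h i = b), p j :=
          Finset.single_le_sum (fun j _ => hp j) hi
      _ = 1 := hsum b
  -- per-layer bound
  have hlayer : ∀ b : Fin H,
      ∑ i ∈ Finset.univ.filter (fun i => h i = b),
        p i * Real.log (p i /
          (1 / ((Finset.univ.filter (fun j => h j = h i)).card : ℝ)))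
        ≤ Real.log (f b) := by
    intro b
    have hstep : ∀ i ∈ Finset.univ.filter (fun i => h i = b),
        p i * Real.log (p i /
          (1 / ((Finset.univ.filter (fun j => h j = h i)).card : ℝ)))
          ≤ p i * Real.log (f b) := by
      intro i hi
      have hib : h i = b := by simpa using hi
      have hfi : (Finset.univ.filter (fun j => h j = h i)).card = f b := by
        rw [hib]
      rcases eq_or_lt_of_le (hp i) with hp0 | hp0
      · simp [← hp0]
      · have hc : (0:ℝ) < (f b : ℝ) := by exact_mod_cast hfpos b
        rw [hfi, one_div, div_eq_mul_inv, inv_inv, Real.log_mul (ne_of_gt hp0) (ne_of_gt hc),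
          mul_add]
        have : p i * Real.log (p i) ≤ 0 :=
          mul_nonpos_of_nonneg_of_nonpos (le_of_lt hp0)
            (Real.log_nonpos (le_of_lt hp0) (hple b i hi))
        linarith
    calc ∑ i ∈ Finset.univ.filter (fun i => h i = b),
          p i * Real.log (p i /
            (1 / ((Finset.univ.filter (fun j => h j = h i)).card : ℝ)))
        ≤ ∑ i ∈ Finset.univ.filter (fun i => h i = b), p i * Real.log (f b) :=
          Finset.sum_le_sum hstep
      _ = Real.log (f b) := by rw [← Finset.sum_mul, hsum b, one_mul]
  refine le_trans (Finset.sum_le_sum fun b _ => hlayer b) ?_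
  -- Jensen: ∑ log (f b) ≤ H log (n/H)
  have hHpos : (0:ℝ) < (H:ℝ) := by exact_mod_cast hH
  have hjensen :
      ∑ b : Fin H, (1 / (H:ℝ)) • Real.log ((f b : ℝ))
        ≤ Real.log (∑ b : Fin H, (1 / (H:ℝ)) • ((f b : ℝ))) := by
    apply (strictConcaveOn_log_Ioi.concaveOn).le_map_sum
    · intro i _; positivity
    · simp [Finset.card_univ]
      field_simp
    · intro b _
      simp only [Set.mem_Ioi]; exact_mod_cast hfpos b
  have hsum' : ∑ b : Fin H, (1 / (H:ℝ)) • ((f b : ℝ))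
      = (Fintype.card ι : ℝ) / (H:ℝ) := by
    rw [← Finset.smul_sum]
    rw [smul_eq_mul]
    rw [show ∑ b : Fin H, ((f b : ℝ)) = ((Fintype.card ι : ℕ) : ℝ) by
      exact_mod_cast congrArg (Nat.cast (R := ℝ)) hcard]
    ring
  rw [hsum'] at hjensen
  have : ∑ b : Fin H, Real.log ((f b : ℝ))
      = (H:ℝ) * ∑ b : Fin H, (1 / (H:ℝ)) • Real.log ((f b : ℝ)) := by
    rw [← Finset.smul_sum, smul_eq_mul]
    field_simp
  rw [this]
  exact mul_le_mul_of_nonneg_left hjensen (le_of_lt hHpos)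
end
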